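/- Let 0 < p ≤ 1, N, m ∈ ℕ, λ > 0, let G : ℝ^N → ℝ^m be any map, y ∈ ℝ^m, and let Γ be a symmetric positive definite m×m real matrix. Define J_p(u) = (λ/2)Σ_{i=1}^N |u_i|^p + (1/2)⟨y − G(u), Γ⁻¹(y − G(u))⟩ and J₂(v) = (λ/2)Σ_{i=1}^N v_i² + (1/2)⟨y − G(Ξ(v)), Γ⁻¹(y − G(Ξ(v)))⟩. Then u* ∈ ℝ^N is a global minimizer of J_p if and only if Ψ(u*) is a global minimizer of J₂. -/
import Mathlib


open Matrix

/-- The transformation `ψ(x) = sgn(x) |x|^(p/2)`. -/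
noncomputable def psi (p : ℝ) (x : ℝ) : ℝ := Real.sign x * |x| ^ (p / 2)

/-- The transformation `ξ(x) = sgn(x) |x|^(2/p)`. -/
noncomputable def xi (p : ℝ) (x : ℝ) : ℝ := Real.sign x * |x| ^ (2 / p)

/-- Componentwise application of `ψ` on `ℝ^N`. -/
noncomputable def Psi (p : ℝ) (N : ℕ) (u : Fin N → ℝ) : Fin N → ℝ :=
  fun i => psi p (u i)

/-- Componentwise application of `ξ` on `ℝ^N`. -/
noncomputable def Xi (p : ℝ) (N : ℕ) (v : Fin N → ℝ) : Fin N → ℝ :=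
  fun i => xi p (v i)

lemma xi_psi (p : ℝ) (hp : 0 < p) (x : ℝ) : xi p (psi p x) = x := by
  rcases lt_trichotomy x 0 with hx | hx | hx
  · have h1 : psi p x = -(|x| ^ (p / 2)) := by
      simp [psi, Real.sign_of_neg hx]
    have hpos : (0:ℝ) < |x| ^ (p / 2) := Real.rpow_pos_of_pos (abs_pos.mpr hx.ne) _
    have h2 : psi p x < 0 := by rw [h1]; linarith
    rw [xi, Real.sign_of_neg h2, h1, abs_neg, abs_of_pos hpos,
      ← Real.rpow_mul (abs_nonneg x)]
    have he : p / 2 * (2 / p) = 1 := by field_simp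
    rw [he, Real.rpow_one, abs_of_neg hx]; ring
  · simp [hx, psi, xi, Real.rpow_ne_zero, hp.ne']
  · have h1 : psi p x = |x| ^ (p / 2) := by
      simp [psi, Real.sign_of_pos hx]
    have hpos : (0:ℝ) < |x| ^ (p / 2) := Real.rpow_pos_of_pos (abs_pos.mpr hx.ne') _
    rw [xi, h1, Real.sign_of_pos hpos, abs_of_pos hpos,
      ← Real.rpow_mul (abs_nonneg x)]
    have : p / 2 * (2 / p) = 1 := by field_simp
    rw [this, Real.rpow_one, abs_of_pos hx, one_mul]

lemma psi_sq (p : ℝ) (hp : 0 < p) (x : ℝ) : (psi p x) ^ 2 = |x| ^ p := by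
  rcases eq_or_ne x 0 with hx | hx
  · simp [hx, psi, Real.zero_rpow hp.ne']
  · have : (Real.sign x) ^ 2 = 1 := by
      rcases lt_or_gt_of_ne hx with h | h
      · simp [Real.sign_of_neg h]
      · simp [Real.sign_of_pos h]
    rw [psi, mul_pow, this, one_mul, ← Real.rpow_natCast (|x| ^ (p/2)) 2,
      ← Real.rpow_mul (abs_nonneg x)]
    norm_num

lemma xi_rpow (p : ℝ) (hp : 0 < p) (x : ℝ) : |xi p x| ^ p = x ^ 2 := by
  rcases eq_or_ne x 0 with hx | hx
  · simp [hx, xi, Real.zero_rpow hp.ne']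
  · have h1 : |Real.sign x| = 1 := by
      rcases lt_or_gt_of_ne hx with h | h
      · simp [Real.sign_of_neg h]
      · simp [Real.sign_of_pos h]
    rw [xi, abs_mul, h1, one_mul, abs_of_nonneg (Real.rpow_nonneg (abs_nonneg x) _),
      ← Real.rpow_mul (abs_nonneg x)]
    have : 2 / p * p = 2 := by field_simp
    rw [this]
    rw [show ((2:ℝ) = ((2:ℕ):ℝ)) by norm_num, Real.rpow_natCast, sq_abs]

theorem lp_l2_global_min_iff (p : ℝ) (hp0 : 0 < p) (hp1 : p ≤ 1)
    (N m : ℕ) (lam : ℝ) (hlam : 0 < lam)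
    (G : (Fin N → ℝ) → (Fin m → ℝ)) (y : Fin m → ℝ)
    (Γ : Matrix (Fin m) (Fin m) ℝ) (hΓ : Γ.PosDef)
    (Jp J2 : (Fin N → ℝ) → ℝ)
    (hJp : ∀ u, Jp u = lam / 2 * ∑ i, |u i| ^ p
        + 1 / 2 * ((y - G u) ⬝ᵥ (Γ⁻¹ *ᵥ (y - G u))))
    (hJ2 : ∀ v, J2 v = lam / 2 * ∑ i, (v i) ^ 2
        + 1 / 2 * ((y - G (Xi p N v)) ⬝ᵥ (Γ⁻¹ *ᵥ (y - G (Xi p N v)))))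
    (ustar : Fin N → ℝ) :
    (∀ w, Jp ustar ≤ Jp w) ↔ (∀ w, J2 (Psi p N ustar) ≤ J2 w) := by
  have hXiPsi : ∀ u : Fin N → ℝ, Xi p N (Psi p N u) = u := by
    intro u; funext i; exact xi_psi p hp0 (u i)
  have hkey : ∀ u : Fin N → ℝ, J2 (Psi p N u) = Jp u := by
    intro u
    rw [hJ2, hJp, hXiPsi]
    congr 1
    congr 1
    exact Finset.sum_congr rfl fun i _ => psi_sq p hp0 (u i)
  have hkey2 : ∀ v : Fin N → ℝ, Jp (Xi p N v) = J2 v := by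
    intro v
    rw [hJ2, hJp]
    congr 1
    congr 1
    exact Finset.sum_congr rfl fun i _ => xi_rpow p hp0 (v i)
  constructor
  · intro h w
    rw [hkey, ← hkey2]
    exact h _
  · intro h w
    rw [← hkey w, ← hkey ustar]
    exact h _
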